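/- Let O be a generic type C column sequence with chains [c_0 (c_1 c_2) … (c_{2p−1} c_{2p}) c_{2p+1}], …, [d_0 (d_1 d_2) … (d_{2q−1} d_{2q}) d_{2q+1}], and define O^# = ((c_0+c_1)/2, (c_0+c_1)/2, (c_2+c_3)/2, (c_2+c_3)/2, …, (c_{2p}+c_{2p+1})/2, (c_{2p}+c_{2p+1})/2, …, (d_0+d_1)/2, (d_0+d_1)/2, …, (d_{2q}+d_{2q+1})/2, (d_{2q}+d_{2q+1})/2), obtained by replacing each consecutive pair of entries within each chain by two copies of its average. Then: (i) O^# is a type C column sequence with the same total sum as O; (ii) Σ_{i≤j} (O^#)_i ≤ Σ_{i≤j} O_i for every j, so the nilpotent orbit with columns O lies in the Zariski closure of the nilpotent orbit with columns O^#; (iii) every chain of O^# has length 2, so no chain of O^# contains a configuration b_{2i−2} > (b_{2i−1} = b_{2i}) = … = (b_{2j−1} = b_{2j}) > b_{2j+1}. -/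

import Mathlib

/-- A type C column sequence: weakly decreasing, even length, and each
consecutive pair `(c_{2i}, c_{2i+1})` has even sum. -/
def TypeC (c : List ℕ) : Prop :=
  Even c.length ∧ c.Chain' (· ≥ ·) ∧
    ∀ i, 2 * i + 1 < c.length → Even (c.getD (2 * i) 0 + c.getD (2 * i + 1) 0)

/-- A chain `[b_0, b_1, …, b_{2k+1}]`: nonempty, of even length, weakly
decreasing, with `b_{2i-1} = b_{2i}` for `1 ≤ i ≤ k`. -/
def IsChainSeq (b : List ℕ) : Prop :=
  b ≠ [] ∧ Even b.length ∧ b.Chain' (· ≥ ·) ∧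
    ∀ i, 2 * i + 2 < b.length → b.getD (2 * i + 1) 0 = b.getD (2 * i + 2) 0

/-- The chain decomposition of a column sequence: cut after each odd
position `2q+1` such that `c_{2q+1} > c_{2q+2}`. -/
def chains : List ℕ → List (List ℕ)
  | a :: b :: rest =>
    match chains rest with
    | [] => [[a, b]]
    | C :: L => if C.headI < b then [a, b] :: C :: L else (a :: b :: C) :: L
  | _ => []

/-- A chain is generic if it is `[b_0 = b_1]` (length 2 with equal entries)
or has length `≥ 4` and `b_{2i} > b_{2i+1}` for all `i`. -/
def GenericChain (b : List ℕ) : Prop :=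
  (b.length = 2 ∧ b.getD 0 0 = b.getD 1 0) ∨
  (4 ≤ b.length ∧ ∀ i, 2 * i + 1 < b.length → b.getD (2 * i + 1) 0 < b.getD (2 * i) 0)

/-- A column sequence is generic if all of its chains are generic. -/
def GenericSeq (c : List ℕ) : Prop := ∀ C ∈ chains c, GenericChain C

/-- The fundamental degeneration of a quadruple `b_0 ≥ b_1 = b_2 ≥ b_3`. -/
def fundDeg (b0 b1 b2 b3 : ℕ) : ℕ × ℕ × ℕ × ℕ :=
  if b0 = b1 then
    if b2 = b3 then (b0 + 1, b1 + 1, b2 - 1, b3 - 1)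
    else (b0 + 1, b1 + 1, b2 - 2, b3)
  else
    if b2 = b3 then (b0, b1 + 2, b2 - 1, b3 - 1)
    else (b0, b1 + 2, b2 - 2, b3)

/-- Replacement of the four consecutive entries at positions
`2i, 2i+1, 2i+2, 2i+3` by their fundamental degeneration, deleting the
last two entries if the two lowered entries both become `0`. -/
def degenAt (c : List ℕ) (i : ℕ) : List ℕ :=
  let q := fundDeg (c.getD (2 * i) 0) (c.getD (2 * i + 1) 0)
    (c.getD (2 * i + 2) 0) (c.getD (2 * i + 3) 0)
  let c' := c.take (2 * i) ++ [q.1, q.2.1, q.2.2.1, q.2.2.2] ++ c.drop (2 * i + 4)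
  if q.2.2.1 = 0 ∧ q.2.2.2 = 0 then c'.dropLast.dropLast else c'

/-- `Norm(O)`: the smallest collection containing `O` and closed under
fundamental degeneration at an interior pair of a chain (the positions
`(2i+1, 2i+2)` carry an interior pair of a chain exactly when the two
entries there are equal). -/
inductive NormMem (O : List ℕ) : List ℕ → Prop
  | base : NormMem O O
  | step (c : List ℕ) (i : ℕ) : NormMem O c → 2 * i + 3 < c.length →
      c.getD (2 * i + 1) 0 = c.getD (2 * i + 2) 0 → NormMem O (degenAt c i)

/-- `O^#`: replace each consecutive pair of entries by two copies of its
average. -/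
def sharp : List ℕ → List ℕ
  | a :: b :: rest => (a + b) / 2 :: (a + b) / 2 :: sharp rest
  | _ => []

/- two-step induction -/
lemma twoStep {P : List ℕ → Prop} (h0 : P []) (h1 : ∀ a, P [a])
    (h2 : ∀ a b l, P l → P (a :: b :: l)) : ∀ l, P l
  | [] => h0
  | [a] => h1 a
  | a :: b :: l => h2 a b l (twoStep h0 h1 h2 l)

lemma chains_cons2 (a b : ℕ) (rest : List ℕ) :
    chains (a :: b :: rest) = match chains rest with
      | [] => [[a, b]]
      | C :: L => if C.headI < b then [a, b] :: C :: L else (a :: b :: C) :: L := rfl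

lemma chains_cons_cons (a b : ℕ) (rest : List ℕ) :
    ∃ C L t, chains (a :: b :: rest) = C :: L ∧ C = a :: b :: t := by
  rcases h : chains rest with _ | ⟨C, L⟩
  · exact ⟨[a,b], [], [], by rw [chains_cons2, h], rfl⟩
  · by_cases hlt : C.headI < b
    · exact ⟨[a,b], C :: L, [], by rw [chains_cons2, h]; simp [hlt], rfl⟩
    · exact ⟨a :: b :: C, L, C, by rw [chains_cons2, h]; simp [hlt], rfl⟩

def WG (c : List ℕ) : Prop :=
  ∀ C ∈ chains c, 2 < C.length →
    ∀ i, 2 * i + 1 < C.length → C.getD (2 * i + 1) 0 < C.getD (2 * i) 0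

lemma generic_wg {c : List ℕ} (h : GenericSeq c) : WG c := by
  intro C hC hlen i hi
  rcases h C hC with ⟨h2, _⟩ | ⟨_, h4⟩
  · omega
  · exact h4 i hi

lemma typeC_tail {a b : ℕ} {rest : List ℕ} (h : TypeC (a :: b :: rest)) : TypeC rest := by
  obtain ⟨he, hc, hp⟩ := h
  refine ⟨?_, (List.isChain_cons.mp (List.isChain_cons.mp hc).2).2, ?_⟩
  · simpa [Nat.even_add_one, List.length_cons] using he
  · intro i hi
    have := hp (i + 1) (by simp [List.length_cons]; omega)
    simpa [List.getD_cons_succ, Nat.mul_add] using this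

lemma wg_tail {a b : ℕ} {rest : List ℕ} (h : WG (a :: b :: rest)) : WG rest := by
  rcases rest with _ | ⟨c, _ | ⟨d, t⟩⟩
  · intro C hC; simp [chains] at hC
  · intro C hC; simp [chains] at hC
  · obtain ⟨C', L', t', hch, hC'⟩ := chains_cons_cons c d t
    intro C hC hlen i hi
    rw [hch] at hC
    by_cases hlt : C'.headI < b
    · have hfull : chains (a :: b :: c :: d :: t) = [a,b] :: C' :: L' := by
        rw [chains_cons2, hch]; simp [hlt]
      exact h C (by rw [hfull]; simp at hC ⊢; tauto) hlen i hi
    · have hfull : chains (a :: b :: c :: d :: t) = (a :: b :: C') :: L' := by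
        rw [chains_cons2, hch]; simp [hlt]
      rcases List.mem_cons.mp hC with heq | hmem
      · subst heq
        have := h (a :: b :: C) (by rw [hfull]; simp) (by simp; omega)
          (i + 1) (by simp; omega)
        simpa [List.getD_cons_succ, Nat.mul_add] using this
      · exact h C (by rw [hfull]; exact List.mem_cons_of_mem _ hmem) hlen i hi

lemma key0 {a b c d : ℕ} {t : List ℕ} (h : TypeC (a :: b :: c :: d :: t))
    (hw : WG (a :: b :: c :: d :: t)) : c + d < a + b := by
  obtain ⟨_, hc, _⟩ := h
  have hab : a ≥ b := (List.isChain_cons_cons.mp hc).1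
  have hbc : b ≥ c := (List.isChain_cons_cons.mp (List.isChain_cons_cons.mp hc).2).1
  have hcd : c ≥ d := (List.isChain_cons_cons.mp (List.isChain_cons_cons.mp (List.isChain_cons_cons.mp hc).2).2).1
  rcases eq_or_lt_of_le hbc with heq | hlt
  swap
  · omega
  · -- c = b, merged chain
    obtain ⟨C', L', t', hch, hC'⟩ := chains_cons_cons c d t
    have hfull : chains (a :: b :: c :: d :: t) = (a :: b :: C') :: L' := by
      rw [chains_cons2, hch, hC']; simp [heq]
    have hmem : (a :: b :: C') ∈ chains (a :: b :: c :: d :: t) := by rw [hfull]; simp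
    have hlen : 2 < (a :: b :: C').length := by subst hC'; simp
    have h1 := hw _ hmem hlen 0 (by subst hC'; simp)
    have h2 := hw _ hmem hlen 1 (by subst hC'; simp)
    subst hC'
    simp [List.getD_cons_succ] at h1 h2
    omega

lemma strictSums : ∀ c : List ℕ, TypeC c → WG c →
    ∀ i, 2 * i + 3 < c.length →
      c.getD (2 * i + 2) 0 + c.getD (2 * i + 3) 0 < c.getD (2 * i) 0 + c.getD (2 * i + 1) 0 := by
  refine twoStep (by intro _ _ i h; simp at h) (by intro a _ _ i h; simp at h) ?_
  intro a b l IH h hw i hi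
  cases i with
  | zero =>
    rcases l with _ | ⟨c, _ | ⟨d, t⟩⟩
    · simp at hi
    · simp at hi
    · simpa [List.getD_cons_succ] using key0 h hw
  | succ i =>
    have := IH (typeC_tail h) (wg_tail hw) i (by simp at hi ⊢; omega)
    simpa [List.getD_cons_succ, Nat.mul_add] using this

lemma sharp_cons (a b : ℕ) (rest : List ℕ) :
    sharp (a :: b :: rest) = (a + b) / 2 :: (a + b) / 2 :: sharp rest := rfl

def SS (c : List ℕ) : Prop := ∀ i, 2 * i + 3 < c.length →
  c.getD (2 * i + 2) 0 + c.getD (2 * i + 3) 0 < c.getD (2 * i) 0 + c.getD (2 * i + 1) 0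

lemma ss_tail {a b : ℕ} {rest : List ℕ} (h : SS (a :: b :: rest)) : SS rest := by
  intro i hi
  have := h (i + 1) (by simp at hi ⊢; omega)
  simpa [List.getD_cons_succ, Nat.mul_add] using this

lemma pair_even {a b : ℕ} {rest : List ℕ} (h : TypeC (a :: b :: rest)) : Even (a + b) := by
  have := h.2.2 0 (by simp)
  simpa using this

lemma sharp_even_len : ∀ c : List ℕ, Even (sharp c).length := by
  refine twoStep (by simp [sharp]) (by intro a; simp [sharp]) ?_
  intro a b l IH
  rw [sharp_cons]
  simpa [Nat.even_add_one, parity_simps] using IH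

lemma sharp_chain' : ∀ c : List ℕ, TypeC c → (sharp c).Chain' (· ≥ ·) := by
  refine twoStep (by simp [sharp, List.Chain']) (by intro a _; simp [sharp, List.Chain']) ?_
  intro a b l IH h
  rw [sharp_cons]
  have hbc := h.2.1
  refine List.isChain_cons_cons.mpr ⟨le_refl _, List.isChain_cons.mpr ⟨?_, IH (typeC_tail h)⟩⟩
  intro y hy
  rcases l with _ | ⟨c, _ | ⟨d, t⟩⟩
  · simp [sharp] at hy
  · simp [sharp] at hy
  · rw [sharp_cons] at hy
    simp at hy
    subst hy
    have h1 : b ≥ c := (List.isChain_cons_cons.mp (List.isChain_cons_cons.mp hbc).2).1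
    have h2 : c ≥ d := (List.isChain_cons_cons.mp (List.isChain_cons_cons.mp (List.isChain_cons_cons.mp hbc).2).2).1
    have h3 : a ≥ b := (List.isChain_cons_cons.mp hbc).1
    exact Nat.div_le_div_right (by omega)

lemma sharp_pairs : ∀ c : List ℕ, TypeC c →
    ∀ i, 2 * i + 1 < (sharp c).length →
      Even ((sharp c).getD (2 * i) 0 + (sharp c).getD (2 * i + 1) 0) := by
  refine twoStep (by intro _ i h; simp [sharp] at h) (by intro a _ i h; simp [sharp] at h) ?_
  intro a b l IH h i hi
  cases i with
  | zero => rw [sharp_cons]; simp only [List.getD_cons_zero, List.getD_cons_succ]; exact Even.add_self _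
  | succ i =>
    rw [sharp_cons] at hi ⊢
    have := IH (typeC_tail h) i (by simp at hi ⊢; omega)
    simpa [List.getD_cons_succ, Nat.mul_add] using this

lemma sharp_typeC (c : List ℕ) (h : TypeC c) : TypeC (sharp c) :=
  ⟨sharp_even_len c, sharp_chain' c h, sharp_pairs c h⟩

lemma sharp_sum : ∀ c : List ℕ, TypeC c → (sharp c).sum = c.sum := by
  refine twoStep (by simp [sharp]) ?_ ?_
  · intro a h
    exact absurd h.1 (by simp)
  · intro a b l IH h
    rw [sharp_cons]
    obtain ⟨k, hk⟩ := pair_even h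
    have := IH (typeC_tail h)
    simp [List.sum_cons, this]
    omega

lemma sharp_prefix : ∀ c : List ℕ, TypeC c →
    ∀ j, ((sharp c).take j).sum ≤ (c.take j).sum := by
  refine twoStep (by simp [sharp]) (by intro a _ j; simp [sharp]) ?_
  intro a b l IH h j
  have hab : a ≥ b := (List.isChain_cons_cons.mp h.2.1).1
  obtain ⟨k, hk⟩ := pair_even h
  rw [sharp_cons]
  match j with
  | 0 => simp
  | 1 => simp; omega
  | (j + 2) =>
    simp only [List.take_succ_cons, List.sum_cons]
    have := IH (typeC_tail h) j
    omega

lemma sharp_chains : ∀ c : List ℕ, TypeC c → SS c →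
    ∀ C ∈ chains (sharp c), C.length = 2 := by
  refine twoStep (by intro _ _ C hC; simp [sharp, chains] at hC)
    (by intro a _ _ C hC; simp [sharp, chains] at hC) ?_
  intro a b l IH h hs C hC
  rw [sharp_cons] at hC
  rcases l with _ | ⟨c, _ | ⟨d, t⟩⟩
  · rw [show sharp [] = [] from rfl, chains_cons2] at hC
    simp [chains] at hC
    simp [hC]
  · exact absurd h.1 (by simp [Nat.even_add_one, parity_simps])
  · obtain ⟨C', L', t', hch, hC'⟩ := chains_cons_cons ((c + d) / 2) ((c + d) / 2) (sharp t)
    rw [← sharp_cons] at hch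
    have hwv : (c + d) / 2 < (a + b) / 2 := by
      have hlt := hs 0 (by simp)
      simp [List.getD_cons_succ] at hlt
      obtain ⟨k1, hk1⟩ := pair_even h
      obtain ⟨k2, hk2⟩ := pair_even (typeC_tail h)
      omega
    have hfull : chains ((a + b) / 2 :: (a + b) / 2 :: sharp (c :: d :: t)) =
        [(a + b) / 2, (a + b) / 2] :: C' :: L' := by
      rw [chains_cons2, hch]
      simp [hC', hwv]
    rw [hfull] at hC
    rcases List.mem_cons.mp hC with rfl | hmem
    · rfl
    · exact IH (typeC_tail h) (ss_tail hs) C (by rw [hch]; exact hmem)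


/-- for a generic type C column sequence `O`, the sequence
`O^#` is a type C column sequence with the same total sum, it is dominated
by `O` in the prefix-sum order (so the orbit of `O` lies in the closure of
the orbit of `O^#`), and all of its chains have length 2. -/
theorem sharp_properties (O : List ℕ) (hO : TypeC O) (hg : GenericSeq O) :
    TypeC (sharp O) ∧ (sharp O).sum = O.sum ∧
      (∀ j, ((sharp O).take j).sum ≤ (O.take j).sum) ∧
      ∀ C ∈ chains (sharp O), C.length = 2 := by
  have hss : SS O := strictSums O hO (generic_wg hg)
  exact ⟨sharp_typeC O hO, sharp_sum O hO, sharp_prefix O hO, sharp_chains O hO hss⟩
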